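/- Let γ ∈ ℂ and let w(x) = −1 + γ/x + u(x) where u is twice differentiable on a domain avoiding 0 and w(x) ∉ {0, 1}. If w satisfies the fifth Painlevé equation P_V(α, β, γ, 2), then u satisfies an equation of the form u'' = (1 − 1/x)·u + f(1/x, u, u'), where f(s,a,b) is analytic near (0,0,0) with f = O(s²) + O(a²) + O(b²) + O(ab). -/

import Mathlib

set_option maxRecDepth 8000
set_option maxHeartbeats 4000000

lemma quadDeriv (g : ℂ → ℂ) (hg : DifferentiableAt ℂ g 0) :
    deriv (fun s => s^2 * g s) 0 = 0 := by
  have h := (hasDerivAt_pow 2 (0:ℂ)).mul hg.hasDerivAt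
  exact h.deriv.trans (by simp)


lemma algMain (α β γ x U B : ℂ) (hx : x ≠ 0)
    (hWne : -1 + γ/x + U ≠ 0) (hW1ne : -2 + γ/x + U ≠ 0) :
    (1 / (2 * (-1 + γ/x + U)) + 1 / ((-1 + γ/x + U) - 1)) * (-γ/x^2 + B) ^ 2
      - (-γ/x^2 + B) / x
      + (((-1 + γ/x + U) - 1) ^ 2 / x ^ 2) * (α * (-1 + γ/x + U) + β / (-1 + γ/x + U))
      + γ * (-1 + γ/x + U) / x
      + 2 * (-1 + γ/x + U) * ((-1 + γ/x + U) + 1) / ((-1 + γ/x + U) - 1)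
      - 2*γ/x^3
    = (1 - 1/x) * U +
      ((1/x)^2 * (-2*γ*(1/x) + (1/(2*(-1+γ*(1/x)+U)) + 1/(-2+γ*(1/x)+U)) * (γ^2*(1/x)^2 - 2*γ*B)
        + γ*(1/x) + (-2+γ*(1/x)+U)^2 * (α*(-1+γ*(1/x)+U) + β/(-1+γ*(1/x)+U))
        + γ^2 + γ^2/(-2+γ*(1/x)+U))
      + U^2 * (1/(-2+γ*(1/x)+U))
      + B^2 * (1/(2*(-1+γ*(1/x)+U)) + 1/(-2+γ*(1/x)+U))
      + (1/x)*B*(-1) + (1/x)*U*(γ+1+2*γ/(-2+γ*(1/x)+U))) := by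
  simp only [div_eq_mul_inv, ← inv_pow, one_div, one_mul] at hWne hW1ne ⊢
  generalize hsx : x⁻¹ = s at hWne hW1ne ⊢
  obtain ⟨W, hWd⟩ : ∃ W, W = -1 + γ*s + U := ⟨_, rfl⟩
  have hU : U = W + 1 - γ*s := by rw [hWd]; ring
  subst hU
  have e2 : -2 + γ*s + (W + 1 - γ*s) = W - 1 := by ring
  rw [e2] at hW1ne
  linear_combination (1 + W) * (mul_inv_cancel₀ hW1ne)

/-- The fifth Painlevé equation `P_V(α,β,γ,δ)` holding for `w` at `x`. -/
def PV (α β γ δ : ℂ) (w : ℂ → ℂ) (x : ℂ) : Prop :=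
  deriv (deriv w) x =
    (1 / (2 * w x) + 1 / (w x - 1)) * (deriv w x) ^ 2 - deriv w x / x
      + ((w x - 1) ^ 2 / x ^ 2) * (α * w x + β / w x)
      + γ * w x / x + δ * w x * (w x + 1) / (w x - 1)

/-- Normalization of P_V in the family III₀: if `w = −1 + γ/x + u` satisfies
`P_V(α,β,γ,2)` on an open set `U` avoiding `0` (with `w ∉ {0,1}`), then `u` satisfies
`u'' = (1 − 1/x)u + f(1/x, u, u')` with `f` analytic near `(0,0,0)`, `f(0,0,0) = 0`, and
all first partial derivatives of `f` vanishing at the origin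
(so `f = O(s²) + O(a²) + O(b²) + O(ab)`). -/
theorem stmt16 (α β γ : ℂ) (U : Set ℂ) (hU : IsOpen U)
    (u w : ℂ → ℂ) (hw : ∀ x ∈ U, w x = -1 + γ / x + u x)
    (hu : AnalyticOn ℂ u U)
    (h0 : ∀ x ∈ U, x ≠ 0) (hwz : ∀ x ∈ U, w x ≠ 0) (hw1 : ∀ x ∈ U, w x ≠ 1)
    (heq : ∀ x ∈ U, PV α β γ 2 w x) :
    ∃ f : ℂ → ℂ → ℂ → ℂ,
      AnalyticAt ℂ (fun p : ℂ × ℂ × ℂ => f p.1 p.2.1 p.2.2) (0, 0, 0) ∧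
      f 0 0 0 = 0 ∧
      deriv (fun s => f s 0 0) 0 = 0 ∧
      deriv (fun a => f 0 a 0) 0 = 0 ∧
      deriv (fun b => f 0 0 b) 0 = 0 ∧
      ∀ x ∈ U, deriv (deriv u) x = (1 - 1 / x) * u x + f (1 / x) (u x) (deriv u x) := by
  refine ⟨fun s a b =>
    s^2 * (-2*γ*s + (1/(2*(-1+γ*s+a)) + 1/(-2+γ*s+a)) * (γ^2*s^2 - 2*γ*b)
        + γ*s + (-2+γ*s+a)^2 * (α*(-1+γ*s+a) + β/(-1+γ*s+a))
        + γ^2 + γ^2/(-2+γ*s+a))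
      + a^2 * (1/(-2+γ*s+a))
      + b^2 * (1/(2*(-1+γ*s+a)) + 1/(-2+γ*s+a))
      + s*b*(-1) + s*a*(γ+1+2*γ/(-2+γ*s+a)), ?_, ?_, ?_, ?_, ?_, ?_⟩
  · -- analyticity
    have hs : AnalyticAt ℂ (fun p : ℂ × ℂ × ℂ => p.1) ((0:ℂ),(0:ℂ),(0:ℂ)) := analyticAt_fst
    have ha : AnalyticAt ℂ (fun p : ℂ × ℂ × ℂ => p.2.1) ((0:ℂ),(0:ℂ),(0:ℂ)) :=
      analyticAt_fst.comp analyticAt_snd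
    have hb : AnalyticAt ℂ (fun p : ℂ × ℂ × ℂ => p.2.2) ((0:ℂ),(0:ℂ),(0:ℂ)) :=
      analyticAt_snd.comp analyticAt_snd
    have hne1 : (-1+γ*(0:ℂ)+(0:ℂ)) ≠ 0 := by norm_num
    have hne2 : (2*(-1+γ*(0:ℂ)+(0:ℂ))) ≠ 0 := by norm_num
    have hne3 : (-2+γ*(0:ℂ)+(0:ℂ)) ≠ 0 := by norm_num
    repeat
      first
        | exact hs
        | exact ha
        | exact hb
        | exact analyticAt_const
        | exact hne1
        | exact hne2
        | exact hne3
        | apply AnalyticAt.div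
        | apply AnalyticAt.inv
        | apply AnalyticAt.add
        | apply AnalyticAt.sub
        | apply AnalyticAt.neg
        | apply AnalyticAt.pow
        | apply AnalyticAt.mul
  · -- value at 0
    norm_num
  · -- deriv in s
    have hEq : (fun s : ℂ => (fun s a b =>
        s^2 * (-2*γ*s + (1/(2*(-1+γ*s+a)) + 1/(-2+γ*s+a)) * (γ^2*s^2 - 2*γ*b)
            + γ*s + (-2+γ*s+a)^2 * (α*(-1+γ*s+a) + β/(-1+γ*s+a))
            + γ^2 + γ^2/(-2+γ*s+a))
          + a^2 * (1/(-2+γ*s+a))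
          + b^2 * (1/(2*(-1+γ*s+a)) + 1/(-2+γ*s+a))
          + s*b*(-1) + s*a*(γ+1+2*γ/(-2+γ*s+a))) s (0:ℂ) (0:ℂ))
        = fun s : ℂ => s^2 * (-2*γ*s + (1/(2*(-1+γ*s+0)) + 1/(-2+γ*s+0)) * (γ^2*s^2 - 2*γ*0)
            + γ*s + (-2+γ*s+0)^2 * (α*(-1+γ*s+0) + β/(-1+γ*s+0))
            + γ^2 + γ^2/(-2+γ*s+0)) := by
      funext s; ring
    rw [hEq]
    exact quadDeriv _ (by fun_prop (disch := norm_num))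
  · -- deriv in a
    have hEq : (fun a : ℂ => (fun s a b =>
        s^2 * (-2*γ*s + (1/(2*(-1+γ*s+a)) + 1/(-2+γ*s+a)) * (γ^2*s^2 - 2*γ*b)
            + γ*s + (-2+γ*s+a)^2 * (α*(-1+γ*s+a) + β/(-1+γ*s+a))
            + γ^2 + γ^2/(-2+γ*s+a))
          + a^2 * (1/(-2+γ*s+a))
          + b^2 * (1/(2*(-1+γ*s+a)) + 1/(-2+γ*s+a))
          + s*b*(-1) + s*a*(γ+1+2*γ/(-2+γ*s+a))) (0:ℂ) a (0:ℂ))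
        = fun a : ℂ => a^2 * (1/(-2+γ*0+a)) := by
      funext a; ring
    rw [hEq]
    exact quadDeriv _ (by fun_prop (disch := norm_num))
  · -- deriv in b
    have hEq : (fun b : ℂ => (fun s a b =>
        s^2 * (-2*γ*s + (1/(2*(-1+γ*s+a)) + 1/(-2+γ*s+a)) * (γ^2*s^2 - 2*γ*b)
            + γ*s + (-2+γ*s+a)^2 * (α*(-1+γ*s+a) + β/(-1+γ*s+a))
            + γ^2 + γ^2/(-2+γ*s+a))
          + a^2 * (1/(-2+γ*s+a))
          + b^2 * (1/(2*(-1+γ*s+a)) + 1/(-2+γ*s+a))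
          + s*b*(-1) + s*a*(γ+1+2*γ/(-2+γ*s+a))) (0:ℂ) (0:ℂ) b)
        = fun b : ℂ => b^2 * (1/(2*(-1+γ*0+0)) + 1/(-2+γ*0+0)) := by
      funext b; ring
    rw [hEq]
    exact quadDeriv _ (by fun_prop (disch := norm_num))
  · -- the equation
    intro x hx
    have hx0 := h0 x hx
    have hwx := hw x hx
    have hUan : AnalyticOnNhd ℂ u U := (hU.analyticOn_iff_analyticOnNhd).mp hu
    have hdw : ∀ y ∈ U, deriv w y = -γ/y^2 + deriv u y := by
      intro y hy
      have hy0 := h0 y hy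
      have h1 : HasDerivAt (fun z : ℂ => γ / z) (-γ/y^2) y := by
        have := (hasDerivAt_inv hy0).const_mul γ
        simpa [div_eq_mul_inv, neg_div, mul_neg] using this
      have hD : HasDerivAt (fun z => -1 + γ/z + u z) (-γ/y^2 + deriv u y) y := by
        have h2 := ((hasDerivAt_const y (-1:ℂ)).add h1).add
          (hUan y hy).differentiableAt.hasDerivAt
        rw [zero_add] at h2; exact h2
      have hev : w =ᶠ[nhds y] fun z => -1 + γ/z + u z :=
        Filter.eventuallyEq_of_mem (hU.mem_nhds hy) hw
      rw [hev.deriv_eq]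
      exact hD.deriv
    have hev2 : deriv w =ᶠ[nhds x] fun z => -γ/z^2 + deriv u z :=
      Filter.eventuallyEq_of_mem (hU.mem_nhds hx) hdw
    have hD1 : HasDerivAt (fun z : ℂ => -γ/z^2) (2*γ/x^3) x := by
      have := (hasDerivAt_const x (-γ)).div (hasDerivAt_pow 2 x) (pow_ne_zero 2 hx0)
      refine this.congr_deriv ?_
      field_simp
      ring
    have hD2 : HasDerivAt (fun z => -γ/z^2 + deriv u z) (2*γ/x^3 + deriv (deriv u) x) x :=
      hD1.add (hUan.deriv x hx).differentiableAt.hasDerivAt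
    have hddw : deriv (deriv w) x = 2*γ/x^3 + deriv (deriv u) x := by
      rw [hev2.deriv_eq]; exact hD2.deriv
    have hPV := heq x hx
    rw [PV, hddw, hdw x hx, hwx] at hPV
    have hWne : (-1 + γ/x + u x) ≠ 0 := by rw [← hwx]; exact hwz x hx
    have hW1ne : (-2 + γ/x + u x) ≠ 0 := by
      have h' : w x - 1 ≠ 0 := sub_ne_zero.mpr (hw1 x hx)
      rw [hwx] at h'
      intro h; exact h' (by linear_combination h)
    have hu'' : deriv (deriv u) x =
        (1 / (2 * (-1 + γ/x + u x)) + 1 / ((-1 + γ/x + u x) - 1)) * (-γ/x^2 + deriv u x) ^ 2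
          - (-γ/x^2 + deriv u x) / x
          + (((-1 + γ/x + u x) - 1) ^ 2 / x ^ 2) * (α * (-1 + γ/x + u x) + β / (-1 + γ/x + u x))
          + γ * (-1 + γ/x + u x) / x
          + 2 * (-1 + γ/x + u x) * ((-1 + γ/x + u x) + 1) / ((-1 + γ/x + u x) - 1)
          - 2*γ/x^3 := by
      linear_combination hPV
    rw [hu'']
    have hW1ne' : ((-1 + γ/x + u x) - 1) ≠ 0 := by
      intro h; exact hW1ne (by linear_combination h)
    exact algMain α β γ x (u x) (deriv u x) hx0 hWne hW1ne
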